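/- Let g : ℝ × ℝ → ℝ be continuously differentiable with g(x, y) > 0 everywhere, let δ > 1, and suppose there are constants M, M' > 0 with g(x, 1) ≤ M and |∂g/∂y(x, 1)| ≤ M' for all x ∈ ℝ. For ε₁ ∈ (0, 1] define F₂(x, y) = 1 + ((y − 1) + ε₁·g(x, y))^δ. Then for every x the partial derivative of F₂ with respect to y at the point (x, 1) satisfies |∂F₂/∂y(x, 1)| ≤ δ·M^(δ−1)·(1 + M')·ε₁^(δ−1), and this bound tends to 0 as ε₁ → 0⁺. -/

import Mathlib

open Filter

/-- Let `g : ℝ × ℝ → ℝ` be `C¹` and positive, `δ > 1`, and suppose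
`g(x,1) ≤ M` and `|∂g/∂y (x,1)| ≤ M'` for all `x`, with `M, M' > 0`. For
`ε₁ ∈ (0,1]` define `F₂(x,y) = 1 + ((y − 1) + ε₁·g(x,y))^δ`. Then
`|∂F₂/∂y (x,1)| ≤ δ·M^(δ−1)·(1+M')·ε₁^(δ−1)` for all `x`, and this bound tends to
`0` as `ε₁ → 0⁺`. -/
theorem stmt_2 (g : ℝ × ℝ → ℝ) (hg : ContDiff ℝ 1 g) (hgpos : ∀ p, 0 < g p)
    (δ : ℝ) (hδ : 1 < δ) (M M' : ℝ) (hM : 0 < M) (hM' : 0 < M')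
    (hbound : ∀ x : ℝ, g (x, 1) ≤ M)
    (hbound' : ∀ x : ℝ, |deriv (fun y => g (x, y)) 1| ≤ M')
    (ε₁ : ℝ) (hε₁ : ε₁ ∈ Set.Ioc (0 : ℝ) 1) :
    (∀ x : ℝ,
      |deriv (fun y => 1 + ((y - 1) + ε₁ * g (x, y)) ^ δ) 1|
        ≤ δ * M ^ (δ - 1) * (1 + M') * ε₁ ^ (δ - 1)) ∧
    Tendsto (fun e : ℝ => δ * M ^ (δ - 1) * (1 + M') * e ^ (δ - 1))
      (nhdsWithin 0 (Set.Ioi 0)) (nhds 0) := by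
  obtain ⟨hε0, hε1⟩ := hε₁
  have hδ1 : (0:ℝ) ≤ δ - 1 := by linarith
  constructor
  · intro x
    set G : ℝ → ℝ := fun y => g (x, y) with hG
    have hGdiff : Differentiable ℝ G := by
      have : Differentiable ℝ g := hg.differentiable one_ne_zero
      exact this.comp (Differentiable.prodMk (differentiable_const x) differentiable_id)
    set G' : ℝ := deriv G 1 with hG'
    have hGd : HasDerivAt G G' 1 := hGdiff.differentiableAt.hasDerivAt
    have hu : HasDerivAt (fun y => (y - 1) + ε₁ * G y) (1 + ε₁ * G') 1 := by
      have h1 : HasDerivAt (fun y : ℝ => y - 1) 1 1 := by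
        simpa using (hasDerivAt_id (1:ℝ)).sub_const 1
      exact h1.add (hGd.const_mul ε₁)
    have hu1 : (1:ℝ) - 1 + ε₁ * G 1 = ε₁ * g (x, 1) := by simp [hG]
    have hupos : (0:ℝ) < ε₁ * g (x, 1) := mul_pos hε0 (hgpos _)
    have hne : ((1:ℝ) - 1 + ε₁ * G 1) ≠ 0 := by rw [hu1]; exact ne_of_gt hupos
    have hF : HasDerivAt (fun y => 1 + ((y - 1) + ε₁ * g (x, y)) ^ δ)
        ((1 + ε₁ * G') * δ * ((1 - 1 + ε₁ * G 1) ^ (δ - 1))) 1 := by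
      exact (hu.rpow_const (Or.inl hne)).const_add 1
    rw [hF.deriv]
    rw [hu1]
    have hmul : (ε₁ * g (x, 1)) ^ (δ - 1) = ε₁ ^ (δ - 1) * g (x, 1) ^ (δ - 1) :=
      Real.mul_rpow hε0.le (hgpos _).le
    have hgM : g (x, 1) ^ (δ - 1) ≤ M ^ (δ - 1) :=
      Real.rpow_le_rpow (hgpos _).le (hbound x) hδ1
    have habs : |1 + ε₁ * G'| ≤ 1 + M' := by
      calc |1 + ε₁ * G'| ≤ |1| + |ε₁ * G'| := abs_add_le _ _
        _ = 1 + ε₁ * |G'| := by rw [abs_one, abs_mul, abs_of_pos hε0]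
        _ ≤ 1 + 1 * M' := by
            gcongr
            · exact (hbound' x)
        _ = 1 + M' := by ring
    have hδpos : (0:ℝ) < δ := by linarith
    have hrpos : (0:ℝ) ≤ (ε₁ * g (x, 1)) ^ (δ - 1) := Real.rpow_nonneg hupos.le _
    rw [abs_mul, abs_mul, abs_of_pos hδpos, abs_of_nonneg hrpos, hmul]
    have hεnn : (0:ℝ) ≤ ε₁ ^ (δ - 1) := Real.rpow_nonneg hε0.le _
    calc |1 + ε₁ * G'| * δ * (ε₁ ^ (δ - 1) * g (x, 1) ^ (δ - 1))
        ≤ (1 + M') * δ * (ε₁ ^ (δ - 1) * M ^ (δ - 1)) := by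
          gcongr
          linarith
      _ = δ * M ^ (δ - 1) * (1 + M') * ε₁ ^ (δ - 1) := by ring
  · have h0 : Tendsto (fun e : ℝ => e ^ (δ - 1)) (nhdsWithin 0 (Set.Ioi 0)) (nhds 0) := by
      have := (Real.continuousAt_rpow_const 0 (δ - 1) (Or.inr (by linarith))).tendsto
      rw [Real.zero_rpow (by linarith : δ - 1 ≠ 0)] at this
      exact this.mono_left nhdsWithin_le_nhds
    have := h0.const_mul (δ * M ^ (δ - 1) * (1 + M'))
    simpa using this
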